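/- arXiv:2404.13716 — 2 statements merged into one kernel-verified Lean document; each statement's English description precedes it below -/
import Mathlib

section
/- Let A ∈ ℝ^{s×s} with (V_sᵀ A V_s)e₁ = e₁ and c₁ = 0. Then A𝟙 = e₁. -/
open Matrix

/-- Lemma 5.2(b): if `(V_sᵀAV_s)e₁ = e₁` and `c₁ = 0` (nodes
pairwise distinct so `V_s` is invertible), then `A𝟙 = e₁`. -/
theorem lsrk_column_property (n : ℕ) (c : Fin (n + 1) → ℝ)
    (hc : Function.Injective c) (hc1 : c 0 = 0)
    (A : Matrix (Fin (n + 1)) (Fin (n + 1)) ℝ)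
    (hA : ∀ i : Fin (n + 1),
      (((Matrix.of fun (i j : Fin (n + 1)) => c i ^ (j : ℕ)).transpose * A *
          (Matrix.of fun (i j : Fin (n + 1)) => c i ^ (j : ℕ)))) i 0 =
        if i = 0 then 1 else 0) :
    A *ᵥ (fun _ : Fin (n + 1) => (1 : ℝ)) = Pi.single 0 1 := by
  set V : Matrix (Fin (n + 1)) (Fin (n + 1)) ℝ :=
    Matrix.of fun (i j : Fin (n + 1)) => c i ^ (j : ℕ) with hV
  have hdet : V.det ≠ 0 := by
    have : V = Matrix.vandermonde c := rfl
    rw [this, Matrix.det_vandermonde_ne_zero_iff]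
    exact hc
  have hinj : Function.Injective (Vᵀ.mulVec) :=
    Matrix.mulVec_injective_iff_isUnit.2 (by
      simpa [Matrix.isUnit_iff_isUnit_det, Matrix.det_transpose] using
        isUnit_iff_ne_zero.2 hdet)
  apply hinj
  funext i
  have h1 : (Vᵀ *ᵥ (A *ᵥ fun _ => (1 : ℝ))) i = ((Vᵀ * A) *ᵥ fun _ => (1 : ℝ)) i := by
    rw [Matrix.mulVec_mulVec]
  have h2 : ((Vᵀ * A) *ᵥ fun _ => (1 : ℝ)) i = (Vᵀ * A * V) i 0 := by
    simp [Matrix.mulVec, Matrix.mul_apply, dotProduct, hV]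
  have h3 : (Vᵀ *ᵥ Pi.single 0 1) i = if i = 0 then 1 else 0 := by
    simp [Matrix.mulVec_single, hV, hc1]
    rcases eq_or_ne i 0 with h | h
    · simp [h]
    · rw [if_neg h]; exact zero_pow (fun hi => h (Fin.ext hi) : (i : ℕ) ≠ 0)
  rw [h1, h2, hA i, h3]
end

section
/- Suppose 𝟙ᵀB(σ) ≡ 𝟙ᵀA (independent of σ), e₁ᵀ(V_sᵀAV_s)e_{k+1} = 1 for k = 0,...,s−1 (i.e. 𝟙ᵀAc^k = 1 for 0 ≤ k ≤ s−1), and 𝟙ᵀK c^{s-1} = 1/s. Then 𝟙ᵀ(A c^s − B(σ)(c−𝟙)^s σ^{−s} − s K c^{s−1}) = (1 − σ^{−s})(𝟙ᵀA c^s − 1) for every σ ≠ 0, where c^k denotes the entrywise k-th power of the node vector and (c−𝟙)^s the entrywise power. -/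
open Matrix

/-- Lemma 5.1(b): under `𝟙ᵀB(σ) ≡ 𝟙ᵀA`, `𝟙ᵀA c^k = 1` for
`0 ≤ k ≤ s−1` and `𝟙ᵀK c^{s−1} = 1/s`, one has
`𝟙ᵀ(A c^s − σ^{−s} B(σ)(c−𝟙)^s − s K c^{s−1}) = (1 − σ^{−s})(𝟙ᵀA c^s − 1)`
for every `σ ≠ 0` (powers of vectors taken entrywise). -/
theorem superconvergence_order_s (s : ℕ) (hs : 0 < s) (c : Fin s → ℝ)
    (A K : Matrix (Fin s) (Fin s) ℝ) (B : ℝ → Matrix (Fin s) (Fin s) ℝ)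
    (hB : ∀ σ : ℝ, (fun _ : Fin s => (1 : ℝ)) ᵥ* B σ = (fun _ : Fin s => (1 : ℝ)) ᵥ* A)
    (hA : ∀ k : ℕ, k ≤ s - 1 →
      ((fun _ : Fin s => (1 : ℝ)) ᵥ* A) ⬝ᵥ (fun i => c i ^ k) = 1)
    (hK : ((fun _ : Fin s => (1 : ℝ)) ᵥ* K) ⬝ᵥ (fun i => c i ^ (s - 1)) = 1 / (s : ℝ)) :
    ∀ σ : ℝ, σ ≠ 0 →
      (fun _ : Fin s => (1 : ℝ)) ⬝ᵥ
          (A *ᵥ (fun i => c i ^ s) -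
            σ⁻¹ ^ s • (B σ *ᵥ (fun i => (c i - 1) ^ s)) -
            (s : ℝ) • (K *ᵥ (fun i => c i ^ (s - 1)))) =
        (1 - σ⁻¹ ^ s) * (((fun _ : Fin s => (1 : ℝ)) ᵥ* A) ⬝ᵥ (fun i => c i ^ s) - 1) := by
  intro σ hσ
  set w := (fun _ : Fin s => (1 : ℝ)) ᵥ* A with hw
  have key : w ⬝ᵥ (fun i => (c i - 1) ^ s) = w ⬝ᵥ (fun i => c i ^ s) - 1 := by
    have expand : (w ⬝ᵥ fun i => (c i - 1) ^ s) =
        ∑ k ∈ Finset.range (s + 1),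
          ((-1 : ℝ) ^ (k + s) * (s.choose k : ℝ)) * (w ⬝ᵥ fun i => c i ^ k) := by
      simp only [dotProduct, Finset.mul_sum]
      rw [Finset.sum_comm]
      refine Finset.sum_congr rfl fun i _ => ?_
      rw [sub_pow, Finset.mul_sum]
      refine Finset.sum_congr rfl fun k _ => ?_
      ring
    rw [expand, Finset.sum_range_succ]
    have h1 : ∀ k ∈ Finset.range s,
        ((-1 : ℝ) ^ (k + s) * (s.choose k : ℝ)) * (w ⬝ᵥ fun i => c i ^ k) =
        ((-1 : ℝ) ^ (k + s) * (s.choose k : ℝ)) := by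
      intro k hk
      rw [hA k (Nat.le_sub_one_of_lt (Finset.mem_range.mp hk)), mul_one]
    rw [Finset.sum_congr rfl h1]
    have halt : (∑ k ∈ Finset.range s, (-1 : ℝ) ^ k * (s.choose k : ℝ)) = -(-1) ^ s := by
      have h := add_pow (-1 : ℝ) 1 s
      simp only [one_pow, mul_one, neg_add_cancel, zero_pow hs.ne', Finset.sum_range_succ,
        Nat.choose_self, Nat.cast_one] at h
      linarith
    have h2 : (∑ k ∈ Finset.range s, (-1 : ℝ) ^ (k + s) * (s.choose k : ℝ)) = -1 := by
      calc (∑ k ∈ Finset.range s, (-1 : ℝ) ^ (k + s) * (s.choose k : ℝ))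
          = (-1 : ℝ) ^ s * ∑ k ∈ Finset.range s, (-1 : ℝ) ^ k * (s.choose k : ℝ) := by
            rw [Finset.mul_sum]
            refine Finset.sum_congr rfl fun k _ => ?_
            rw [pow_add]; ring
        _ = -1 := by
            rw [halt, mul_neg, ← pow_add, Even.neg_one_pow ⟨s, rfl⟩]
    rw [h2]
    have hss : ((-1 : ℝ) ^ (s + s) * (s.choose s : ℝ)) * (w ⬝ᵥ fun i => c i ^ s) =
        w ⬝ᵥ fun i => c i ^ s := by
      rw [Even.neg_one_pow ⟨s, rfl⟩, Nat.choose_self]; push_cast; ring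
    rw [hss]; ring
  have hBa : (fun _ : Fin s => (1 : ℝ)) ⬝ᵥ (B σ *ᵥ fun i => (c i - 1) ^ s) =
      w ⬝ᵥ (fun i => (c i - 1) ^ s) := by
    rw [dotProduct_mulVec, hB, hw]
  have hKa : (fun _ : Fin s => (1 : ℝ)) ⬝ᵥ (K *ᵥ fun i => c i ^ (s - 1)) = 1 / (s : ℝ) := by
    rw [dotProduct_mulVec]; exact hK
  rw [dotProduct_sub, dotProduct_sub, dotProduct_smul, dotProduct_smul, hBa, hKa, key,
    dotProduct_mulVec, ← hw]
  have hs' : (s : ℝ) ≠ 0 := Nat.cast_ne_zero.mpr hs.ne'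
  field_simp
  linear_combination (-1 : ℝ) * (mul_inv_cancel₀ hs')
end
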